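/- For ν ≥ 0, the function r ↦ r·I_ν′(r)/I_ν(r) is strictly increasing on (0,∞), tends to ν as r → 0⁺, and tends to ∞ as r → ∞, where I_ν is the modified Bessel function of the first kind. -/

import Mathlib

/-- Modified Bessel function of the first kind,
`I ν x = ∑_{k≥0} (x/2)^(ν+2k) / (k! Γ(ν+k+1))`. -/
noncomputable def besselI (ν x : ℝ) : ℝ :=
  ∑' k : ℕ, (x / 2) ^ (ν + 2 * (k : ℝ)) / (Nat.factorial k * Real.Gamma (ν + k + 1))

set_option linter.unusedSectionVars false

open Filter Real Set Topology

namespace BesselAux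

noncomputable def a (ν : ℝ) (k : ℕ) : ℝ := 1 / (Nat.factorial k * Real.Gamma (ν + k + 1))

variable {ν : ℝ} (hν : 0 ≤ ν)

include hν

lemma nuk_pos (k : ℕ) : 0 < ν + k + 1 := by positivity

lemma a_pos (k : ℕ) : 0 < a ν k := by
  have h1 : (0:ℝ) < Nat.factorial k := by positivity
  have h2 : 0 < Real.Gamma (ν + k + 1) := Real.Gamma_pos_of_pos (nuk_pos hν k)
  unfold a; positivity

lemma a_succ (k : ℕ) : a ν (k + 1) = a ν k / ((k + 1) * (ν + k + 1)) := by
  have h2 : 0 < Real.Gamma (ν + k + 1) := Real.Gamma_pos_of_pos (nuk_pos hν k)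
  have hg : Real.Gamma (ν + (k+1:ℕ) + 1) = (ν + k + 1) * Real.Gamma (ν + k + 1) := by
    have : ν + (k+1:ℕ) + 1 = (ν + k + 1) + 1 := by push_cast; ring
    rw [this, Real.Gamma_add_one (ne_of_gt (nuk_pos hν k))]
  have hf : (Nat.factorial (k+1) : ℝ) = (k+1) * Nat.factorial k := by
    rw [Nat.factorial_succ]; push_cast; ring
  unfold a
  rw [hg, hf]
  have h1 : (0:ℝ) < Nat.factorial k := by positivity
  have h3 : (0:ℝ) < (k:ℝ) + 1 := by positivity
  field_simp

lemma summable_master {R : ℝ} (hR : 0 ≤ R) :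
    Summable (fun k : ℕ => ((k:ℝ)+1)^2 * a ν k * R^k) := by
  rcases eq_or_lt_of_le hR with h | h
  · apply summable_of_ne_finset_zero (s := ({0} : Finset ℕ))
    intro k hk
    simp only [Finset.mem_singleton] at hk
    rw [← h, zero_pow hk, mul_zero]
  · set f : ℕ → ℝ := fun k => ((k:ℝ)+1)^2 * a ν k * R^k with hf
    have hfpos : ∀ k, 0 < f k := fun k => by
      have := a_pos hν k; positivity
    apply summable_of_ratio_test_tendsto_lt_one (l := 0) one_pos
      (Eventually.of_forall fun k => (hfpos k).ne')
    have hbound : ∀ k : ℕ, ‖f (k+1)‖ / ‖f k‖ ≤ 4 * R / ((k:ℝ)+1) := by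
      intro k
      have hk1 : (0:ℝ) < (k:ℝ) + 1 := by positivity
      rw [Real.norm_eq_abs, Real.norm_eq_abs, abs_of_pos (hfpos _), abs_of_pos (hfpos _),
        div_le_div_iff₀ (hfpos k) ]
      · have hfk1 : f (k+1) = ((k:ℝ)+2)^2 * (a ν k / ((k+1) * (ν + k + 1))) * (R^k * R) := by
          simp only [hf, a_succ hν k]
          push_cast
          ring_nf
        rw [hfk1]
        have hnu : (1:ℝ) ≤ ν + k + 1 := by
          have : (0:ℝ) ≤ (k:ℝ) := Nat.cast_nonneg k
          linarith
        have ha := a_pos hν k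
        have hRk : (0:ℝ) ≤ R ^ k := by positivity
        set D := ((k:ℝ)+1) * (ν + ↑k + 1) with hD
        have hDpos : (0:ℝ) < D := by positivity
        set t := a ν k / D with htdef
        have ht : a ν k = t * D := (div_mul_cancel₀ _ hDpos.ne').symm
        have htpos : 0 ≤ t := by positivity
        have s1 : ((k:ℝ)+2)^2 ≤ 4*((k:ℝ)+1)^2 := by nlinarith [Nat.cast_nonneg (α := ℝ) k]
        have key : ((k:ℝ)+2)^2*((k:ℝ)+1) ≤ 4*((k:ℝ)+1)^2*D := by
          calc ((k:ℝ)+2)^2*((k:ℝ)+1) ≤ 4*((k:ℝ)+1)^2*((k:ℝ)+1) := by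
                nlinarith [mul_le_mul_of_nonneg_right s1 hk1.le]
            _ ≤ 4*((k:ℝ)+1)^2*D := by
                rw [hD]
                nlinarith [le_mul_of_one_le_right hk1.le hnu, sq_nonneg ((k:ℝ)+1)]
        have h2 : (0:ℝ) ≤ t * (R^k * R) := by positivity
        have hfk : f k = ((k:ℝ)+1)^2 * (t * D) * R^k := by
          simp only [hf]
          rw [← ht]
        rw [hfk]
        nlinarith [mul_le_mul_of_nonneg_right key h2]
      · positivity
    -- now the tendsto
    have h0 : ∀ k : ℕ, 0 ≤ ‖f (k+1)‖ / ‖f k‖ := fun k => by positivity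
    have hlim : Tendsto (fun k : ℕ => 4 * R / ((k:ℝ)+1)) atTop (𝓝 0) := by
      have := tendsto_one_div_add_atTop_nhds_zero_nat.const_mul (4*R)
      simpa [mul_one_div, div_eq_mul_inv] using this
    exact squeeze_zero h0 hbound hlim

end BesselAux

namespace BesselAux
open Metric
variable {ν : ℝ} (hν : 0 ≤ ν)
include hν

lemma summable_of_le {c : ℕ → ℝ} (hc : ∀ k, 0 ≤ c k)
    (hle : ∀ k, c k ≤ ((k:ℝ)+1)^2 * a ν k) {R : ℝ} (hR : 0 ≤ R) :
    Summable fun k : ℕ => c k * R ^ k :=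
  Summable.of_nonneg_of_le (fun k => mul_nonneg (hc k) (pow_nonneg hR k))
    (fun k => mul_le_mul_of_nonneg_right (hle k) (pow_nonneg hR k)) (summable_master hν hR)

lemma hasDerivAt_series {c : ℕ → ℝ} (hc : ∀ k, 0 ≤ c k)
    (hbig : ∀ k : ℕ, ((k:ℝ)+1) * c k ≤ ((k:ℝ)+1)^2 * a ν k) (x : ℝ) :
    HasDerivAt (fun y : ℝ => ∑' k : ℕ, c k * y ^ k)
      (∑' k : ℕ, c k * ((k:ℝ) * x ^ (k-1))) x := by
  have hle : ∀ k, c k ≤ ((k:ℝ)+1)^2 * a ν k := fun k =>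
    le_trans (le_mul_of_one_le_left (hc k) (by linarith [Nat.cast_nonneg (α := ℝ) k])) (hbig k)
  set R : ℝ := |x| + 1 with hRdef
  have hR1 : (1:ℝ) ≤ R := by rw [hRdef]; linarith [abs_nonneg x]
  have hRpos : (0:ℝ) < R := lt_of_lt_of_le one_pos hR1
  have hu : Summable (fun k : ℕ => (((k:ℝ)+1) * c k) * R^k) :=
    summable_of_le hν (fun k => mul_nonneg (by positivity) (hc k)) hbig hRpos.le
  refine hasDerivAt_tsum_of_isPreconnected hu (isOpen_ball (x := (0:ℝ)) (ε := R))
    ((convex_ball (0:ℝ) R).isPreconnected)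
    (g := fun k y => c k * y ^ k) (g' := fun k y => c k * ((k:ℝ) * y ^ (k-1)))
    (fun k y _ => (hasDerivAt_pow k y).const_mul (c k)) ?_ (mem_ball_self hRpos) ?_ ?_
  · intro k y hy
    have hyR : |y| ≤ R := by
      rw [mem_ball, Real.dist_eq, sub_zero] at hy
      exact hy.le
    have h1 : ‖c k * ((k:ℝ) * y ^ (k-1))‖ = c k * ((k:ℝ) * |y| ^ (k-1)) := by
      rw [norm_mul, norm_mul, Real.norm_eq_abs, Real.norm_eq_abs, Real.norm_eq_abs,
        abs_of_nonneg (hc k), abs_pow, Nat.abs_cast]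
    rw [h1]
    have h2 : |y| ^ (k-1) ≤ R ^ k :=
      le_trans (pow_le_pow_left₀ (abs_nonneg y) hyR _) (pow_le_pow_right₀ hR1 (Nat.sub_le k 1))
    calc c k * ((k:ℝ) * |y| ^ (k-1)) ≤ c k * (((k:ℝ)+1) * R ^ k) := by
          have : (k:ℝ) * |y| ^ (k-1) ≤ ((k:ℝ)+1) * R^k :=
            mul_le_mul (by linarith) h2 (by positivity) (by positivity)
          exact mul_le_mul_of_nonneg_left this (hc k)
      _ = (((k:ℝ)+1) * c k) * R^k := by ring
  · exact summable_of_le hν hc hle le_rfl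
  · rw [mem_ball, Real.dist_eq, sub_zero, hRdef]; linarith [abs_nonneg x]

end BesselAux

namespace BesselAux

noncomputable def P (ν : ℝ) (x : ℝ) : ℝ := ∑' k : ℕ, a ν k * x ^ k
noncomputable def Q (ν : ℝ) (x : ℝ) : ℝ := ∑' k : ℕ, ((k:ℝ) * a ν k) * x ^ k

variable {ν : ℝ} (hν : 0 ≤ ν)
include hν

lemma hbigA : ∀ k : ℕ, ((k:ℝ)+1) * a ν k ≤ ((k:ℝ)+1)^2 * a ν k := fun k =>
  mul_le_mul_of_nonneg_right (by nlinarith [Nat.cast_nonneg (α := ℝ) k]) (a_pos hν k).le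

lemma hbigKA : ∀ k : ℕ, ((k:ℝ)+1) * ((k:ℝ) * a ν k) ≤ ((k:ℝ)+1)^2 * a ν k := fun k => by
  rw [← mul_assoc]
  exact mul_le_mul_of_nonneg_right (by nlinarith [Nat.cast_nonneg (α := ℝ) k]) (a_pos hν k).le

lemma summable_P {R : ℝ} (hR : 0 ≤ R) : Summable fun k : ℕ => a ν k * R ^ k :=
  summable_of_le hν (fun k => (a_pos hν k).le)
    (fun k => le_mul_of_one_le_left (a_pos hν k).le
      (by nlinarith [Nat.cast_nonneg (α := ℝ) k])) hR

lemma summable_Q {R : ℝ} (hR : 0 ≤ R) : Summable fun k : ℕ => ((k:ℝ) * a ν k) * R ^ k :=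
  summable_of_le hν (fun k => mul_nonneg (Nat.cast_nonneg k) (a_pos hν k).le)
    (fun k => mul_le_mul_of_nonneg_right (by nlinarith [Nat.cast_nonneg (α := ℝ) k]) (a_pos hν k).le) hR

lemma hasDerivAt_P (x : ℝ) :
    HasDerivAt (P ν) (∑' k : ℕ, a ν k * ((k:ℝ) * x ^ (k-1))) x := by
  unfold P
  exact hasDerivAt_series hν (fun k => (a_pos hν k).le) (hbigA hν) x

lemma continuous_P : Continuous (P ν) := by
  have : Differentiable ℝ (P ν) := fun x => (hasDerivAt_P hν x).differentiableAt
  exact this.continuous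

lemma continuous_Q : Continuous (Q ν) := by
  have : Differentiable ℝ (Q ν) := fun x => by
    have := hasDerivAt_series hν
      (fun k => mul_nonneg (Nat.cast_nonneg k) (a_pos hν k).le) (hbigKA hν) x
    exact (this).differentiableAt
  exact this.continuous

lemma x_mul_derivP (x : ℝ) :
    x * (∑' k : ℕ, a ν k * ((k:ℝ) * x ^ (k-1))) = Q ν x := by
  unfold Q
  rw [← tsum_mul_left]
  apply tsum_congr
  intro k
  cases k with
  | zero => simp
  | succ n => simp only [Nat.add_sub_cancel]; push_cast; rw [pow_succ]; ring

lemma P_pos {x : ℝ} (hx : 0 ≤ x) : 0 < P ν x := by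
  apply Summable.tsum_pos (summable_P hν hx) (fun k => mul_nonneg (a_pos hν k).le (pow_nonneg hx k)) 0
  simpa using a_pos hν 0

lemma P_zero : P ν 0 = a ν 0 := by
  unfold P
  rw [tsum_eq_single 0 (fun k hk => by rw [zero_pow hk, mul_zero])]
  simp

lemma Q_zero : Q ν 0 = 0 := by
  unfold Q
  rw [tsum_eq_single 0 (fun k hk => by rw [zero_pow hk, mul_zero])]
  simp

end BesselAux

namespace BesselAux

variable {ν : ℝ} (hν : 0 ≤ ν)
include hν

set_option maxHeartbeats 1000000 in
lemma core_lt {s t : ℝ} (hs : 0 < s) (hst : s < t) :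
    Q ν s * P ν t < Q ν t * P ν s := by
  have ht : 0 < t := lt_trans hs hst
  set F : ℕ × ℕ → ℝ :=
    fun p => ((p.1:ℝ) * a ν p.1) * a ν p.2 * (t^p.1 * s^p.2 - s^p.1 * t^p.2) with hFdef
  -- summability of the two product families
  have hn1 : ∀ k : ℕ, 0 ≤ ((k:ℝ) * a ν k) * t ^ k := fun k => by
    have := a_pos hν k; positivity
  have hn2 : ∀ k : ℕ, 0 ≤ a ν k * s ^ k := fun k => by
    have := a_pos hν k; positivity
  have hn3 : ∀ k : ℕ, 0 ≤ ((k:ℝ) * a ν k) * s ^ k := fun k => by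
    have := a_pos hν k; positivity
  have hn4 : ∀ k : ℕ, 0 ≤ a ν k * t ^ k := fun k => by
    have := a_pos hν k; positivity
  have hsum1 : Summable fun p : ℕ × ℕ => (((p.1:ℝ) * a ν p.1) * t^p.1) * (a ν p.2 * s^p.2) :=
    (summable_Q hν ht.le).mul_of_nonneg (summable_P hν hs.le) hn1 hn2
  have hsum2 : Summable fun p : ℕ × ℕ => (((p.1:ℝ) * a ν p.1) * s^p.1) * (a ν p.2 * t^p.2) :=
    (summable_Q hν hs.le).mul_of_nonneg (summable_P hν ht.le) hn3 hn4
  have hFsum : Summable F := by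
    apply (hsum1.sub hsum2).congr
    intro p
    simp only [hFdef, Pi.sub_apply]
    ring
  -- tsum F equals the difference of products
  have htsum1 : Q ν t * P ν s = ∑' p : ℕ × ℕ, (((p.1:ℝ) * a ν p.1) * t^p.1) * (a ν p.2 * s^p.2) := by
    apply tsum_mul_tsum_of_summable_norm
    · exact ((summable_Q hν ht.le).congr fun k => (Real.norm_of_nonneg (hn1 k)).symm)
    · exact ((summable_P hν hs.le).congr fun k => (Real.norm_of_nonneg (hn2 k)).symm)
  have htsum2 : Q ν s * P ν t = ∑' p : ℕ × ℕ, (((p.1:ℝ) * a ν p.1) * s^p.1) * (a ν p.2 * t^p.2) := by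
    apply tsum_mul_tsum_of_summable_norm
    · exact ((summable_Q hν hs.le).congr fun k => (Real.norm_of_nonneg (hn3 k)).symm)
    · exact ((summable_P hν ht.le).congr fun k => (Real.norm_of_nonneg (hn4 k)).symm)
  have hD : Q ν t * P ν s - Q ν s * P ν t = ∑' p, F p := by
    rw [htsum1, htsum2, ← Summable.tsum_sub hsum1 hsum2]
    apply tsum_congr
    intro p
    simp only [hFdef]
    ring
  -- symmetrization
  have hFswapsum : Summable fun p : ℕ × ℕ => F p.swap :=
    ((Equiv.prodComm ℕ ℕ).summable_iff.mpr hFsum)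
  have hswap : ∑' p : ℕ × ℕ, F p.swap = ∑' p, F p :=
    (Equiv.prodComm ℕ ℕ).tsum_eq F
  set G : ℕ × ℕ → ℝ := fun p => F p + F p.swap with hGdef
  have hGsum : Summable G := hFsum.add hFswapsum
  have hGnonneg : ∀ p : ℕ × ℕ, 0 ≤ G p := by
    rintro ⟨j, k⟩
    have haj := a_pos hν j
    have hak := a_pos hν k
    have hGeq : G (j, k) = ((j:ℝ) - (k:ℝ)) * (t^j * s^k - s^j * t^k) * (a ν j * a ν k) := by
      simp only [hGdef, hFdef, Prod.swap_prod_mk]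
      ring
    rw [hGeq]
    rcases le_total k j with h | h
    · have hc : (0:ℝ) ≤ (j:ℝ) - (k:ℝ) := by
        have := Nat.cast_le (α := ℝ).mpr h; linarith
      obtain ⟨m, rfl⟩ := Nat.exists_eq_add_of_le h
      have hd : (0:ℝ) ≤ t^(k+m) * s^k - s^(k+m) * t^k := by
        have hp : t^(k+m) * s^k - s^(k+m) * t^k = (t^k * s^k) * (t^m - s^m) := by
          rw [pow_add, pow_add]; ring
        rw [hp]
        have : s^m ≤ t^m := pow_le_pow_left₀ hs.le hst.le m
        have h1 : (0:ℝ) ≤ t^k * s^k := by positivity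
        nlinarith
      have := mul_nonneg (mul_nonneg hc hd) (by positivity : (0:ℝ) ≤ a ν (k+m) * a ν k)
      exact this
    · have hc : (j:ℝ) - (k:ℝ) ≤ 0 := by
        have := Nat.cast_le (α := ℝ).mpr h; linarith
      obtain ⟨m, rfl⟩ := Nat.exists_eq_add_of_le h
      have hd : t^j * s^(j+m) - s^j * t^(j+m) ≤ 0 := by
        have hp : t^j * s^(j+m) - s^j * t^(j+m) = (t^j * s^j) * (s^m - t^m) := by
          rw [pow_add, pow_add]; ring
        rw [hp]
        have : s^m ≤ t^m := pow_le_pow_left₀ hs.le hst.le m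
        have h1 : (0:ℝ) ≤ t^j * s^j := by positivity
        nlinarith
      have hprod := mul_nonneg (neg_nonneg.2 hc) (neg_nonneg.2 hd)
      rw [neg_mul_neg] at hprod
      exact mul_nonneg hprod (by positivity : (0:ℝ) ≤ a ν j * a ν (j+m))
  have hGpos : 0 < G (1, 0) := by
    have ha0 := a_pos hν 0
    have ha1 := a_pos hν 1
    have : G (1, 0) = a ν 1 * a ν 0 * (t - s) := by
      simp only [hGdef, hFdef, Prod.swap_prod_mk]
      push_cast
      ring
    rw [this]
    have : 0 < t - s := by linarith
    positivity
  have hGtsum : 0 < ∑' p, G p := Summable.tsum_pos hGsum hGnonneg (1, 0) hGpos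
  have h2D : ∑' p, G p = 2 * ∑' p, F p := by
    rw [hGdef]
    rw [Summable.tsum_add hFsum hFswapsum, hswap]
    ring
  have hDpos : 0 < Q ν t * P ν s - Q ν s * P ν t := by
    rw [hD]
    linarith [h2D ▸ hGtsum]
  linarith

lemma ratio_lt {s t : ℝ} (hs : 0 < s) (hst : s < t) :
    Q ν s / P ν s < Q ν t / P ν t := by
  rw [div_lt_div_iff₀ (P_pos hν hs.le) (P_pos hν (lt_trans hs hst).le)]
  exact core_lt hν hs hst

end BesselAux

namespace BesselAux

variable {ν : ℝ} (hν : 0 ≤ ν)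
include hν

lemma besselI_eq {x : ℝ} (hx : 0 < x) :
    besselI ν x = (x/2) ^ ν * P ν ((x/2)^2) := by
  unfold besselI P
  rw [← tsum_mul_left]
  apply tsum_congr
  intro k
  have h2 : (0:ℝ) < x/2 := by positivity
  rw [Real.rpow_add h2]
  have hpw : (x/2) ^ (2*(k:ℝ)) = ((x/2)^2)^k := by
    rw [show (2*(k:ℝ)) = ((2*k : ℕ):ℝ) by push_cast; ring, Real.rpow_natCast, pow_mul]
  rw [hpw]
  unfold a
  rw [div_eq_mul_inv, one_div]
  ring

lemma besselI_hasDerivAt {r : ℝ} (hr : 0 < r) :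
    HasDerivAt (besselI ν)
      ((ν * (r/2)^(ν-1) * (1/2)) * P ν ((r/2)^2)
        + (r/2)^ν * ((∑' k : ℕ, a ν k * ((k:ℝ) * ((r/2)^2) ^ (k-1))) * (2 * (r/2)^1 * (1/2)))) r := by
  have h2 : (0:ℝ) < r/2 := by positivity
  have hEq : besselI ν =ᶠ[nhds r] fun x => (x/2)^ν * P ν ((x/2)^2) := by
    filter_upwards [isOpen_Ioi.mem_nhds (show r ∈ Set.Ioi 0 from hr)] with x hx
    exact besselI_eq hν hx
  have hinner : HasDerivAt (fun x : ℝ => x/2) (1/2) r := by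
    simpa using (hasDerivAt_id r).div_const 2
  have h1 : HasDerivAt (fun x : ℝ => (x/2)^ν) ((ν * (r/2)^(ν-1)) * (1/2)) r :=
    ((Real.hasDerivAt_rpow_const (Or.inl h2.ne')).comp r hinner :)
  have hsq : HasDerivAt (fun x : ℝ => (x/2)^2) ((2 * (r/2)^1) * (1/2)) r :=
    ((hasDerivAt_pow 2 (r/2)).comp r hinner :)
  have h3 : HasDerivAt (fun x : ℝ => P ν ((x/2)^2))
      ((∑' k : ℕ, a ν k * ((k:ℝ) * ((r/2)^2) ^ (k-1))) * ((2 * (r/2)^1) * (1/2))) r :=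
    ((hasDerivAt_P hν ((r/2)^2)).comp r hsq :)
  have := (h1.mul h3).congr_of_eventuallyEq hEq
  convert this using 2 <;> ring

lemma key_eq {r : ℝ} (hr : 0 < r) :
    r * deriv (besselI ν) r / besselI ν r
      = ν + 2 * (Q ν ((r/2)^2) / P ν ((r/2)^2)) := by
  have h2 : (0:ℝ) < r/2 := by positivity
  set t : ℝ := (r/2)^2 with htdef
  set S : ℝ := ∑' k : ℕ, a ν k * ((k:ℝ) * t ^ (k-1)) with hSdef
  have hP := P_pos hν (by positivity : (0:ℝ) ≤ t)
  have hd : deriv (besselI ν) r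
      = (ν * (r/2)^(ν-1) * (1/2)) * P ν t + (r/2)^ν * (S * (2 * (r/2)^1 * (1/2))) :=
    (besselI_hasDerivAt hν hr).deriv
  have hQ : t * S = Q ν t := x_mul_derivP hν t
  have hpow : (r/2)^(ν-1) * (r/2) = (r/2)^ν := by
    have hadd := Real.rpow_add h2 (ν-1) 1
    rw [Real.rpow_one, show ν - 1 + 1 = ν by ring] at hadd
    exact hadd.symm
  have hrpos : (0:ℝ) < (r/2)^ν := Real.rpow_pos_of_pos h2 ν
  have hden : (0:ℝ) < (r/2)^ν * P ν t := mul_pos hrpos hP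
  rw [besselI_eq hν hr, hd, ← htdef, div_eq_iff hden.ne', ← hQ, ← hpow]
  field_simp
  ring

end BesselAux

namespace BesselAux

variable {ν : ℝ} (hν : 0 ≤ ν)
include hν

lemma QP_atTop : Tendsto (fun u : ℝ => Q ν u / P ν u) atTop atTop := by
  rw [tendsto_atTop]
  intro b
  obtain ⟨m, hm⟩ := exists_nat_ge (2 * b + 1)
  have hm' : 2 * b ≤ (m:ℝ) := by linarith
  -- the polynomial part
  set Pm : ℝ → ℝ := fun u => ∑ k ∈ Finset.range m, a ν k * u ^ k with hPmdef
  -- Pm / P tends to 0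
  have hPoly : Tendsto (fun u : ℝ => Pm u / P ν u) atTop (𝓝 0) := by
    have hub : ∀ᶠ u : ℝ in atTop, Pm u / P ν u ≤
        ∑ k ∈ Finset.range m, (a ν k * u ^ k) / (a ν m * u ^ m) := by
      filter_upwards [eventually_gt_atTop (0:ℝ)] with u hu
      have hamum : 0 < a ν m * u ^ m := by have := a_pos hν m; positivity
      have hPge : a ν m * u ^ m ≤ P ν u :=
        Summable.le_tsum (summable_P hν hu.le) m
          (fun j _ => mul_nonneg (a_pos hν j).le (pow_nonneg hu.le j))
      have hPmnonneg : 0 ≤ Pm u :=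
        Finset.sum_nonneg fun k _ => mul_nonneg (a_pos hν k).le (pow_nonneg hu.le k)
      calc Pm u / P ν u ≤ Pm u / (a ν m * u ^ m) := by gcongr
        _ = ∑ k ∈ Finset.range m, (a ν k * u ^ k) / (a ν m * u ^ m) := by
            rw [hPmdef, Finset.sum_div]
    have hlb : ∀ᶠ u : ℝ in atTop, 0 ≤ Pm u / P ν u := by
      filter_upwards [eventually_gt_atTop (0:ℝ)] with u hu
      have hPmnonneg : 0 ≤ Pm u :=
        Finset.sum_nonneg fun k _ => mul_nonneg (a_pos hν k).le (pow_nonneg hu.le k)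
      exact div_nonneg hPmnonneg (P_pos hν hu.le).le
    have hsum0 : Tendsto (fun u : ℝ =>
        ∑ k ∈ Finset.range m, (a ν k * u ^ k) / (a ν m * u ^ m)) atTop (𝓝 0) := by
      have : ∀ k ∈ Finset.range m, Tendsto
          (fun u : ℝ => (a ν k * u ^ k) / (a ν m * u ^ m)) atTop (𝓝 0) := by
        intro k hk
        have hkm : k < m := Finset.mem_range.mp hk
        have hbase := tendsto_pow_div_pow_atTop_zero (𝕜 := ℝ) hkm
        have : (fun u : ℝ => (a ν k * u ^ k) / (a ν m * u ^ m))
            = fun u : ℝ => (a ν k / a ν m) * (u ^ k / u ^ m) := by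
          funext u
          rw [div_mul_div_comm]
        rw [this]
        simpa using hbase.const_mul (a ν k / a ν m)
      have := tendsto_finset_sum (Finset.range m) this
      simpa using this
    exact squeeze_zero' hlb hub hsum0
  have hhalf : ∀ᶠ u : ℝ in atTop, Pm u / P ν u < 1/2 :=
    hPoly.eventually (gt_mem_nhds (by norm_num))
  filter_upwards [eventually_gt_atTop (0:ℝ), hhalf] with u hu hhu
  have hP := P_pos hν hu.le
  -- Q ≥ m * (P - Pm)
  have htail : Pm u + ∑' k : ℕ, a ν (k + m) * u ^ (k + m) = P ν u := by
    rw [hPmdef]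
    exact Summable.sum_add_tsum_nat_add m (summable_P hν hu.le)
  have hQsplit : (∑ k ∈ Finset.range m, ((k:ℝ) * a ν k) * u ^ k)
      + ∑' k : ℕ, (((k + m : ℕ):ℝ) * a ν (k + m)) * u ^ (k + m) = Q ν u :=
    Summable.sum_add_tsum_nat_add m (summable_Q hν hu.le)
  have hheadQ : 0 ≤ ∑ k ∈ Finset.range m, ((k:ℝ) * a ν k) * u ^ k :=
    Finset.sum_nonneg fun k _ => by
      have := a_pos hν k
      have := pow_nonneg hu.le k
      positivity
  have htsumle : (m:ℝ) * ∑' k : ℕ, a ν (k + m) * u ^ (k + m)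
      ≤ ∑' k : ℕ, (((k + m : ℕ):ℝ) * a ν (k + m)) * u ^ (k + m) := by
    rw [← tsum_mul_left]
    apply Summable.tsum_le_tsum _ (((summable_P hν hu.le).comp_injective (add_left_injective m)).mul_left _)
      (((summable_Q hν hu.le)).comp_injective (add_left_injective m))
    intro k
    have h1 : (m:ℝ) ≤ ((k + m : ℕ):ℝ) := by push_cast; linarith [Nat.cast_nonneg (α := ℝ) k]
    have h2 : 0 ≤ a ν (k + m) * u ^ (k + m) := by
      have := a_pos hν (k+m); positivity
    calc (m:ℝ) * (a ν (k + m) * u ^ (k + m)) ≤ ((k + m : ℕ):ℝ) * (a ν (k + m) * u ^ (k + m)) :=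
          mul_le_mul_of_nonneg_right h1 h2
      _ = (((k + m : ℕ):ℝ) * a ν (k + m)) * u ^ (k + m) := by ring
  have hQge : (m:ℝ) * (P ν u - Pm u) ≤ Q ν u := by
    rw [← htail, ← hQsplit]
    have : (m:ℝ) * (Pm u + ∑' k : ℕ, a ν (k + m) * u ^ (k + m) - Pm u)
        = (m:ℝ) * ∑' k : ℕ, a ν (k + m) * u ^ (k + m) := by ring
    rw [this]
    linarith [htsumle]
  -- conclude
  have hdiv : (m:ℝ) * (P ν u - Pm u) / P ν u ≤ Q ν u / P ν u := by gcongr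
  have heq : (m:ℝ) * (P ν u - Pm u) / P ν u = (m:ℝ) - (m:ℝ) * (Pm u / P ν u) := by
    field_simp
  have hmul : (m:ℝ) * (Pm u / P ν u) ≤ (m:ℝ) * (1/2) :=
    mul_le_mul_of_nonneg_left hhu.le (Nat.cast_nonneg m)
  rw [heq] at hdiv
  linarith

end BesselAux

theorem besselI_log_deriv_strictMono (ν : ℝ) (hν : 0 ≤ ν) :
    StrictMonoOn (fun r : ℝ => r * deriv (besselI ν) r / besselI ν r) (Set.Ioi 0) ∧
    Filter.Tendsto (fun r : ℝ => r * deriv (besselI ν) r / besselI ν r)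
      (nhdsWithin 0 (Set.Ioi 0)) (nhds ν) ∧
    Filter.Tendsto (fun r : ℝ => r * deriv (besselI ν) r / besselI ν r)
      Filter.atTop Filter.atTop := by
  refine ⟨?_, ?_, ?_⟩
  · intro x hx y hy hxy
    have hx0 : (0:ℝ) < x := hx
    have hy0 : (0:ℝ) < y := hy
    dsimp only
    rw [BesselAux.key_eq hν hx0, BesselAux.key_eq hν hy0]
    have h1 : (0:ℝ) < (x/2)^2 := by positivity
    have h2 : (x/2)^2 < (y/2)^2 := by nlinarith
    linarith [BesselAux.ratio_lt hν h1 h2]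
  · have hc1 : Continuous fun r : ℝ => (r/2)^2 := by continuity
    have hPne : BesselAux.P ν (((0:ℝ)/2)^2) ≠ 0 := by
      norm_num
      exact (BesselAux.P_pos hν (le_refl 0)).ne'
    have hcont : ContinuousAt
        (fun r : ℝ => ν + 2 * (BesselAux.Q ν ((r/2)^2) / BesselAux.P ν ((r/2)^2))) 0 := by
      have hQ : Continuous fun r : ℝ => BesselAux.Q ν ((r/2)^2) :=
        (BesselAux.continuous_Q hν).comp hc1
      have hP : Continuous fun r : ℝ => BesselAux.P ν ((r/2)^2) :=
        (BesselAux.continuous_P hν).comp hc1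
      exact continuousAt_const.add
        (((hQ.continuousAt).div (hP.continuousAt) hPne).const_mul 2)
    have htendsto : Filter.Tendsto
        (fun r : ℝ => ν + 2 * (BesselAux.Q ν ((r/2)^2) / BesselAux.P ν ((r/2)^2)))
        (nhdsWithin 0 (Set.Ioi 0)) (nhds ν) := by
      refine Filter.Tendsto.mono_left ?_ nhdsWithin_le_nhds
      have h0 := hcont.tendsto
      convert h0 using 2
      norm_num [BesselAux.Q_zero hν]
    apply Filter.Tendsto.congr' _ htendsto
    filter_upwards [self_mem_nhdsWithin] with r hr
    exact (BesselAux.key_eq hν hr).symm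
  · have hinner : Filter.Tendsto (fun r : ℝ => r/2) Filter.atTop Filter.atTop :=
      Filter.tendsto_id.atTop_div_const (by norm_num)
    have hcomp : Filter.Tendsto (fun r : ℝ => (r/2)^2) Filter.atTop Filter.atTop :=
      (tendsto_pow_atTop two_ne_zero).comp hinner
    have hQP := (BesselAux.QP_atTop hν).comp hcomp
    have hmain : Filter.Tendsto
        (fun r : ℝ => ν + 2 * (BesselAux.Q ν ((r/2)^2) / BesselAux.P ν ((r/2)^2)))
        Filter.atTop Filter.atTop := by
      apply Filter.tendsto_atTop_add_const_left
      exact hQP.const_mul_atTop two_pos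
    apply Filter.Tendsto.congr' _ hmain
    filter_upwards [Filter.eventually_gt_atTop (0:ℝ)] with r hr
    exact (BesselAux.key_eq hν hr).symm
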